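/- Let (M, m) be a maximally reductive pair and A ⊆ H. Suppose a, m ∈ A ∩ M, σ(m) ∈ A ∖ M, σ(a) ∉ A ∪ M, and |a| − cut(A) > 0. Then (A ∪ M, a) is a reductive pair; in particular |a| − cut(A ∪ M) > 0. -/

import Mathlib

open Finset

/-- `cut d A = ∑_{x ∈ A} ∑_{y ∉ A} d x y`, the total weight of pairs
separated by the partition `{A, H ∖ A}`. -/
def cut {H : Type*} [Fintype H] [DecidableEq H] {Λ : Type*}
    [AddCommGroup Λ] [LinearOrder Λ] [IsOrderedAddMonoid Λ] (d : H → H → Λ) (A : Finset H) : Λ :=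
  ∑ x ∈ A, ∑ y ∈ Aᶜ, d x y

/-- `(X, x)` is a reductive pair if `x ∈ X`, `σ x ∉ X` and `|x| - cut X > 0`,
where `|x| = cut {x}`. -/
def IsReductivePair {H : Type*} [Fintype H] [DecidableEq H] {Λ : Type*}
    [AddCommGroup Λ] [LinearOrder Λ] [IsOrderedAddMonoid Λ] (d : H → H → Λ) (σ : H → H)
    (X : Finset H) (x : H) : Prop :=
  x ∈ X ∧ σ x ∉ X ∧ 0 < cut d {x} - cut d X

/-- `X` is a side of a reductive ideal edge if some `x` with `x` and `σ x` on
opposite sides of the partition `{X, H ∖ X}` satisfies `|x| - cut X > 0`. -/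
def IsSideOfReductiveIdealEdge {H : Type*} [Fintype H] [DecidableEq H] {Λ : Type*}
    [AddCommGroup Λ] [LinearOrder Λ] [IsOrderedAddMonoid Λ] (d : H → H → Λ) (σ : H → H)
    (X : Finset H) : Prop :=
  ∃ x : H, ((x ∈ X ∧ σ x ∉ X) ∨ (x ∉ X ∧ σ x ∈ X)) ∧ 0 < cut d {x} - cut d X

/-- `(M, m)` is maximally reductive: it is a reductive pair whose reduction
`|m| - cut M` is at least that of any reductive pair. -/
def IsMaximallyReductivePair {H : Type*} [Fintype H] [DecidableEq H] {Λ : Type*}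
    [AddCommGroup Λ] [LinearOrder Λ] [IsOrderedAddMonoid Λ] (d : H → H → Λ) (σ : H → H)
    (M : Finset H) (m : H) : Prop :=
  IsReductivePair d σ M m ∧
    ∀ X x, IsReductivePair d σ X x → cut d {x} - cut d X ≤ cut d {m} - cut d M

section Aux

variable {H : Type*} [Fintype H] [DecidableEq H] {Λ : Type*}
    [AddCommGroup Λ] [LinearOrder Λ] [IsOrderedAddMonoid Λ] (d : H → H → Λ)

/-- Total weight between two sets. -/
def Ew (X Y : Finset H) : Λ := ∑ x ∈ X, ∑ y ∈ Y, d x y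

lemma Ew_union_left {X Y : Finset H} (Z : Finset H) (h : Disjoint X Y) :
    Ew d (X ∪ Y) Z = Ew d X Z + Ew d Y Z := Finset.sum_union h

lemma Ew_union_right (X : Finset H) {Y Z : Finset H} (h : Disjoint Y Z) :
    Ew d X (Y ∪ Z) = Ew d X Y + Ew d X Z := by
  unfold Ew
  rw [← Finset.sum_add_distrib]
  exact Finset.sum_congr rfl fun x _ => Finset.sum_union h

lemma Ew_nonneg (hnonneg : ∀ x y, 0 ≤ d x y) (X Y : Finset H) : 0 ≤ Ew d X Y :=
  Finset.sum_nonneg fun _ _ => Finset.sum_nonneg fun _ _ => hnonneg _ _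

lemma cut_eq_Ew (A : Finset H) : cut d A = Ew d A Aᶜ := rfl

lemma cut_submodular (hnonneg : ∀ x y, 0 ≤ d x y) (A M : Finset H) :
    cut d (A ∪ M) + cut d (A ∩ M) ≤ cut d A + cut d M := by
  set P := A ∩ M with hP
  set Q := A \ M with hQ
  set R := M \ A with hR
  set S := (A ∪ M)ᶜ with hS
  have hPQ : Disjoint P Q := by
    rw [Finset.disjoint_left]; intro x hx hx'
    simp only [hP, hQ, Finset.mem_inter, Finset.mem_sdiff] at hx hx'; tauto
  have hPR : Disjoint P R := by
    rw [Finset.disjoint_left]; intro x hx hx'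
    simp only [hP, hR, Finset.mem_inter, Finset.mem_sdiff] at hx hx'; tauto
  have hPS : Disjoint P S := by
    rw [Finset.disjoint_left]; intro x hx hx'
    simp only [hP, hS, Finset.mem_inter, Finset.mem_compl, Finset.mem_union] at hx hx'; tauto
  have hQR : Disjoint Q R := by
    rw [Finset.disjoint_left]; intro x hx hx'
    simp only [hQ, hR, Finset.mem_sdiff] at hx hx'; tauto
  have hQS : Disjoint Q S := by
    rw [Finset.disjoint_left]; intro x hx hx'
    simp only [hQ, hS, Finset.mem_sdiff, Finset.mem_compl, Finset.mem_union] at hx hx'; tauto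
  have hRS : Disjoint R S := by
    rw [Finset.disjoint_left]; intro x hx hx'
    simp only [hR, hS, Finset.mem_sdiff, Finset.mem_compl, Finset.mem_union] at hx hx'; tauto
  have hA : A = P ∪ Q := by
    ext x; simp only [hP, hQ, Finset.mem_union, Finset.mem_inter, Finset.mem_sdiff]; tauto
  have hM : M = P ∪ R := by
    ext x; simp only [hP, hR, Finset.mem_union, Finset.mem_inter, Finset.mem_sdiff]; tauto
  have hAc : Aᶜ = R ∪ S := by
    ext x
    simp only [hR, hS, Finset.mem_union, Finset.mem_compl, Finset.mem_sdiff]; tauto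
  have hMc : Mᶜ = Q ∪ S := by
    ext x
    simp only [hQ, hS, Finset.mem_union, Finset.mem_compl, Finset.mem_sdiff]; tauto
  have hU : A ∪ M = P ∪ (Q ∪ R) := by
    ext x
    simp only [hP, hQ, hR, Finset.mem_union, Finset.mem_inter, Finset.mem_sdiff]; tauto
  have hIc : Pᶜ = Q ∪ (R ∪ S) := by
    ext x
    simp only [hP, hQ, hR, hS, Finset.mem_union, Finset.mem_compl, Finset.mem_inter,
      Finset.mem_sdiff]; tauto
  have e1 : cut d A = Ew d P R + Ew d P S + (Ew d Q R + Ew d Q S) := by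
    rw [cut_eq_Ew, hAc]
    conv_lhs => rw [hA]
    rw [Ew_union_left d _ hPQ, Ew_union_right d _ hRS, Ew_union_right d _ hRS]
  have e2 : cut d M = Ew d P Q + Ew d P S + (Ew d R Q + Ew d R S) := by
    rw [cut_eq_Ew, hMc]
    conv_lhs => rw [hM]
    rw [Ew_union_left d _ hPR, Ew_union_right d _ hQS, Ew_union_right d _ hQS]
  have hQRS : Disjoint (Q ∪ R) S := Finset.disjoint_union_left.mpr ⟨hQS, hRS⟩
  have hPQR : Disjoint P (Q ∪ R) := Finset.disjoint_union_right.mpr ⟨hPQ, hPR⟩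
  have hRSd : Disjoint R S := hRS
  have e3 : cut d (A ∪ M) = Ew d P S + (Ew d Q S + Ew d R S) := by
    rw [cut_eq_Ew, hU]
    have : (P ∪ (Q ∪ R))ᶜ = S := by rw [hS, hU]
    rw [this, Ew_union_left d _ hPQR, Ew_union_left d _ hQR]
  have e4 : cut d (A ∩ M) = Ew d P Q + (Ew d P R + Ew d P S) := by
    rw [cut_eq_Ew]
    show Ew d P Pᶜ = _
    rw [hIc, Ew_union_right d _ (Finset.disjoint_union_right.mpr ⟨hQR, hQS⟩),
      Ew_union_right d _ hRS]
  have hkey : cut d A + cut d M =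
      cut d (A ∪ M) + cut d (A ∩ M) + (Ew d Q R + Ew d R Q) := by
    rw [e1, e2, e3, e4]; abel
  have hpos : 0 ≤ Ew d Q R + Ew d R Q :=
    add_nonneg (Ew_nonneg d hnonneg _ _) (Ew_nonneg d hnonneg _ _)
  rw [hkey]
  exact le_add_of_nonneg_right hpos

end Aux

/-- Case of the Key Lemma: if `a, m ∈ A ∩ M`, `σ m ∈ A ∖ M`, `σ a ∉ A ∪ M` and
`|a| - cut A > 0`, then `(A ∪ M, a)` is a reductive pair;
in particular `|a| - cut (A ∪ M) > 0`. -/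
theorem key_lemma_case_union_a {H : Type*} [Fintype H] [DecidableEq H] {Λ : Type*}
    [AddCommGroup Λ] [LinearOrder Λ] [IsOrderedAddMonoid Λ] (d : H → H → Λ)
    (hsymm : ∀ x y, d x y = d y x) (hnonneg : ∀ x y, 0 ≤ d x y)
    (σ : H → H) (hinv : ∀ x, σ (σ x) = x) (hfix : ∀ x, σ x ≠ x)
    (hσnorm : ∀ x, cut d {σ x} = cut d {x})
    (M : Finset H) (m : H) (hMm : IsMaximallyReductivePair d σ M m)
    (A : Finset H) (a : H)
    (haAM : a ∈ A ∩ M) (hmAM : m ∈ A ∩ M)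
    (hsm : σ m ∈ A \ M) (hsa : σ a ∉ A ∪ M)
    (ha : 0 < cut d {a} - cut d A) :
    IsReductivePair d σ (A ∪ M) a ∧ 0 < cut d {a} - cut d (A ∪ M) := by
  have hsub := cut_submodular d hnonneg A M
  have hMle : cut d M ≤ cut d (A ∩ M) := by
    by_cases h : 0 < cut d {m} - cut d (A ∩ M)
    · -- (A ∩ M, m) is a reductive pair; use maximality
      have hσm : σ m ∉ A ∩ M := by
        intro hc
        exact (Finset.mem_sdiff.mp hsm).2 (Finset.mem_inter.mp hc).2
      have hred : IsReductivePair d σ (A ∩ M) m := ⟨hmAM, hσm, h⟩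
      have := hMm.2 _ _ hred
      exact (sub_le_sub_iff_left _).mp this
    · -- cut {m} ≤ cut (A ∩ M) and cut M < cut {m}
      push_neg at h
      have h1 : cut d {m} ≤ cut d (A ∩ M) := sub_nonpos.mp h
      have h2 : cut d M < cut d {m} := sub_pos.mp hMm.1.2.2
      exact le_of_lt (lt_of_lt_of_le h2 h1)
  have hcutle : cut d (A ∪ M) ≤ cut d A := by
    have : cut d (A ∪ M) + cut d (A ∩ M) ≤ cut d A + cut d (A ∩ M) :=
      le_trans hsub (add_le_add_right hMle _)
    exact le_of_add_le_add_right this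
  have hfinal : 0 < cut d {a} - cut d (A ∪ M) :=
    lt_of_lt_of_le ha (sub_le_sub_left hcutle _)
  have haU : a ∈ A ∪ M := Finset.mem_union_left _ (Finset.mem_inter.mp haAM).1
  exact ⟨⟨haU, hsa, hfinal⟩, hfinal⟩
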